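/- Let q = 1/1.409. There do not exist 10 points in the plane with pairwise distances at least q such that all lie in 1 ≤ |P| ≤ 1.2571, at least 9 lie in 1 ≤ |P| ≤ 1.1513, at least 8 lie in 1 ≤ |P| ≤ 1.1254, at least 7 lie in 1 ≤ |P| ≤ 1.1138, and at least 6 lie in 1 ≤ |P| ≤ 1.1072. -/

import Mathlib

open Real

-- quartic cos lower bound
lemma cosLB {s : ℝ} (h0 : 0 ≤ s) (h1 : s ≤ 1) : 1 - s^2/2 + s^4/32 ≤ Real.cos s := by
  have h : Real.cos s = 2*Real.cos (s/2)^2 - 1 := by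
    have h0 := Real.cos_sq (s/2)
    rw [show 2*(s/2) = s by ring] at h0
    linarith
  have h2 : 1 - (s/2)^2/2 ≤ Real.cos (s/2) := Real.one_sub_sq_div_two_le_cos
  have h3 : (0:ℝ) ≤ 1 - (s/2)^2/2 := by nlinarith
  nlinarith [sq_nonneg (Real.cos (s/2))]

-- corner lemma
lemma cornerLemma (x y u v M Q : ℝ) (hx1 : 1 ≤ x) (hxu : x ≤ u) (hy1 : 1 ≤ y) (hyv : y ≤ v)
    (h11 : 1 + 1 - Q ≤ 2*M) (h1v : 1 + v^2 - Q ≤ 2*M*v) (hu1 : u^2 + 1 - Q ≤ 2*M*u)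
    (huv : u^2 + v^2 - Q ≤ 2*M*u*v) :
    x^2 + y^2 - Q ≤ 2*M*x*y := by
  rcases le_or_gt (x + 1) (2*M*y) with h | h
  · -- use x ∈ {1}: (x-1)(x+1-2My) ≤ 0, reduce to corner (1,y)
    rcases le_or_gt (y + 1) (2*M) with h' | h'
    · nlinarith [mul_nonneg (sub_nonneg.2 hx1) (sub_nonneg.2 hy1)]
    · nlinarith [mul_nonneg (sub_nonneg.2 hx1) (sub_nonneg.2 hyv)]
  · rcases le_or_gt (y + 1) (2*M*u) with h' | h'
    · nlinarith [mul_nonneg (sub_nonneg.2 hxu) (sub_nonneg.2 hy1), hx1, hy1]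
    · nlinarith [mul_nonneg (sub_nonneg.2 hxu) (sub_nonneg.2 hyv), hx1, hy1]

-- real angle lemma
lemma angLemma {d s : ℝ} (hd1 : -(2*π) < d) (hd2 : d < 2*π)
    (hs0 : 0 ≤ s) (hs1 : s ≤ π) (hc : Real.cos d ≤ Real.cos s) :
    s ≤ |d| ∧ s ≤ 2*π - |d| := by
  have hpi := Real.pi_pos
  have habs : |d| < 2*π := abs_lt.2 ⟨hd1, hd2⟩
  have habs0 : 0 ≤ |d| := abs_nonneg d
  have hcabs : Real.cos |d| = Real.cos d := by
    rcases abs_choice d with h | h <;> rw [h] <;> simp [Real.cos_neg]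
  rcases le_or_gt (|d|) π with h | h
  · constructor
    · by_contra hlt
      push_neg at hlt
      have := Real.strictAntiOn_cos ⟨habs0, h⟩ ⟨hs0, hs1⟩ hlt
      rw [hcabs] at this; linarith
    · linarith
  · constructor
    · linarith
    · by_contra hlt
      push_neg at hlt
      have h2 : Real.cos (2*π - |d|) = Real.cos d := by
        rw [Real.cos_sub, Real.cos_two_pi, Real.sin_two_pi]
        simpa using hcabs
      have hmem : 2*π - |d| ∈ Set.Icc 0 π := ⟨by linarith, by linarith⟩
      have := Real.strictAntiOn_cos hmem ⟨hs0, hs1⟩ hlt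
      rw [h2] at this; linarith

-- law of cosines for complex numbers: cos of arg difference
lemma cosDiff (z w : ℂ) (hz : z ≠ 0) (hw : w ≠ 0) :
    Real.cos (Complex.arg z - Complex.arg w) =
      (z.re * w.re + z.im * w.im) / (‖z‖ * ‖w‖) := by
  rw [Real.cos_sub, Complex.cos_arg hz, Complex.cos_arg hw, Complex.sin_arg, Complex.sin_arg]
  field_simp

lemma distSq (z w : ℂ) :
    (dist z w)^2 = ‖z‖^2 + ‖w‖^2 - 2*(z.re*w.re + z.im*w.im) := by
  rw [Complex.dist_eq]
  simp only [← Complex.sq_norm, Complex.sq_norm, Complex.normSq_apply, Complex.sub_re,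
    Complex.sub_im]
  ring

lemma pairGap (z w : ℂ) (u v W W' M : ℝ) (hz1 : 1 ≤ ‖z‖) (hw1 : 1 ≤ ‖w‖)
    (hzu : ‖z‖ ≤ u) (hwv : ‖w‖ ≤ v)
    (hd : (1/1.409 : ℝ) ≤ dist z w)
    (hW0 : 0 ≤ W) (hW'0 : 0 ≤ W') (hs1 : W + W' ≤ 1)
    (hM : M ≤ 1 - (W+W')^2/2 + (W+W')^4/32)
    (h11 : 1 + 1 - (1/1.409:ℝ)^2 ≤ 2*M) (h1v : 1 + v^2 - (1/1.409:ℝ)^2 ≤ 2*M*v)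
    (hu1 : u^2 + 1 - (1/1.409:ℝ)^2 ≤ 2*M*u) (huv : u^2 + v^2 - (1/1.409:ℝ)^2 ≤ 2*M*u*v) :
    W + W' ≤ |Complex.arg z - Complex.arg w| ∧
      W + W' ≤ 2*π - |Complex.arg z - Complex.arg w| := by
  have hpi := Real.pi_gt_three
  have hz0 : z ≠ 0 := by
    intro h; rw [h] at hz1; simp at hz1; linarith
  have hw0 : w ≠ 0 := by
    intro h; rw [h] at hw1; simp at hw1; linarith
  have haz : (0:ℝ) < ‖z‖ := lt_of_lt_of_le one_pos hz1
  have haw : (0:ℝ) < ‖w‖ := lt_of_lt_of_le one_pos hw1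
  have hdist : (1/1.409:ℝ)^2 ≤ (dist z w)^2 := by
    apply pow_le_pow_left₀ (by norm_num) hd
  have hdot : z.re*w.re + z.im*w.im ≤ M * (‖z‖ * ‖w‖) := by
    have hc := cornerLemma (‖z‖) (‖w‖) u v M ((1/1.409:ℝ)^2)
      hz1 hzu hw1 hwv h11 h1v hu1 huv
    have hds := distSq z w
    nlinarith
  have hcos : Real.cos (Complex.arg z - Complex.arg w) ≤ Real.cos (W + W') := by
    rw [cosDiff z w hz0 hw0]
    have h1 : (z.re*w.re + z.im*w.im) / (‖z‖ * ‖w‖) ≤ M := by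
      rw [div_le_iff₀ (by positivity)]
      linarith
    have h2 : M ≤ Real.cos (W+W') := le_trans hM (cosLB (by linarith) hs1)
    linarith
  exact angLemma
    (by have := Complex.neg_pi_lt_arg z; have := Complex.arg_le_pi w; linarith)
    (by have := Complex.arg_le_pi z; have := Complex.neg_pi_lt_arg w; linarith)
    (by linarith) (by linarith) hcos

/-- Tier predicate: (radius bound, half-angle weight). -/
def Tier (u W : ℝ) : Prop :=
  (u = 1.2571 ∧ W = 0.2677) ∨ (u = 1.1513 ∧ W = 0.3086) ∨ (u = 1.1254 ∧ W = 0.3171) ∨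
  (u = 1.1138 ∧ W = 0.3208) ∨ (u = 1.1072 ∧ W = 0.3228)

lemma tierFacts {u v W W' : ℝ} (h : Tier u W) (h' : Tier v W') :
    0 ≤ W ∧ 0 ≤ W' ∧ W + W' ≤ 1 ∧
    (1 + 1 - (1/1.409:ℝ)^2 ≤ 2*(1 - (W+W')^2/2 + (W+W')^4/32)) ∧
    (1 + v^2 - (1/1.409:ℝ)^2 ≤ 2*(1 - (W+W')^2/2 + (W+W')^4/32)*v) ∧
    (u^2 + 1 - (1/1.409:ℝ)^2 ≤ 2*(1 - (W+W')^2/2 + (W+W')^4/32)*u) ∧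
    (u^2 + v^2 - (1/1.409:ℝ)^2 ≤ 2*(1 - (W+W')^2/2 + (W+W')^4/32)*u*v) := by
  rcases h with ⟨rfl,rfl⟩|⟨rfl,rfl⟩|⟨rfl,rfl⟩|⟨rfl,rfl⟩|⟨rfl,rfl⟩ <;>
    rcases h' with ⟨rfl,rfl⟩|⟨rfl,rfl⟩|⟨rfl,rfl⟩|⟨rfl,rfl⟩|⟨rfl,rfl⟩ <;>
    refine ⟨by norm_num, by norm_num, by norm_num, by norm_num, by norm_num, by norm_num,
      by norm_num⟩

private lemma fm2 (h : 2 < 10) : (⟨2,h⟩ : Fin 10) = 2 := rfl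
private lemma fm3 (h : 3 < 10) : (⟨3,h⟩ : Fin 10) = 3 := rfl
private lemma fm4 (h : 4 < 10) : (⟨4,h⟩ : Fin 10) = 4 := rfl
private lemma fm5 (h : 5 < 10) : (⟨5,h⟩ : Fin 10) = 5 := rfl
private lemma fm6 (h : 6 < 10) : (⟨6,h⟩ : Fin 10) = 6 := rfl
private lemma fm7 (h : 7 < 10) : (⟨7,h⟩ : Fin 10) = 7 := rfl
private lemma fm8 (h : 8 < 10) : (⟨8,h⟩ : Fin 10) = 8 := rfl
private lemma fm9 (h : 9 < 10) : (⟨9,h⟩ : Fin 10) = 9 := rfl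
lemma sum10 (f : Fin 10 → ℝ) : ∑ i, f i
    = f 0 + f 1 + f 2 + f 3 + f 4 + f 5 + f 6 + f 7 + f 8 + f 9 := by
  simp only [Fin.sum_univ_succ, Finset.univ_unique, Fin.default_eq_zero, Finset.sum_singleton]
  norm_num [Fin.succ, fm2, fm3, fm4, fm5, fm6, fm7, fm8, fm9]
  ring

lemma sumIte (S : Finset (Fin 10)) (c : ℝ) :
    (∑ i : Fin 10, if i ∈ S then c else 0) = S.card * c := by
  rw [Finset.sum_ite_mem, Finset.univ_inter, Finset.sum_const, nsmul_eq_mul]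

theorem stmt_14 :
    ¬ ∃ X : Fin 10 → EuclideanSpace ℝ (Fin 2),
      Function.Injective X ∧
      (∀ i, (1 : ℝ) ≤ ‖X i‖ ∧ ‖X i‖ ≤ 1.2571) ∧
      (∃ S : Finset (Fin 10), 9 ≤ S.card ∧ ∀ i ∈ S, ‖X i‖ ≤ 1.1513) ∧
      (∃ S : Finset (Fin 10), 8 ≤ S.card ∧ ∀ i ∈ S, ‖X i‖ ≤ 1.1254) ∧
      (∃ S : Finset (Fin 10), 7 ≤ S.card ∧ ∀ i ∈ S, ‖X i‖ ≤ 1.1138) ∧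
      (∃ S : Finset (Fin 10), 6 ≤ S.card ∧ ∀ i ∈ S, ‖X i‖ ≤ 1.1072) ∧
      (∀ i j, i ≠ j → (1 / 1.409 : ℝ) ≤ dist (X i) (X j)) := by
  rintro ⟨X, -, hall, ⟨S9, hS9c, hS9⟩, ⟨S8, hS8c, hS8⟩, ⟨S7, hS7c, hS7⟩, ⟨S6, hS6c, hS6⟩, hdist⟩
  classical
  set z : Fin 10 → ℂ := fun i => ⟨X i 0, X i 1⟩ with hz
  have hnorm : ∀ i, ‖z i‖ = ‖X i‖ := by
    intro i
    rw [EuclideanSpace.norm_eq, Complex.norm_def, Complex.normSq_apply]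
    congr 1
    simp [Fin.sum_univ_two, sq_abs]
    ring
  have hdisteq : ∀ i j, dist (z i) (z j) = dist (X i) (X j) := by
    intro i j
    rw [Complex.dist_eq, Complex.norm_def, Complex.normSq_apply, EuclideanSpace.dist_eq]
    congr 1
    simp [Fin.sum_univ_two, Real.dist_eq, sq_abs, Complex.sub_re, Complex.sub_im]
    ring
  set wt : Fin 10 → ℝ := fun i =>
    0.2677 + (if i ∈ S9 then 0.0409 else 0) + (if i ∈ S8 then 0.0085 else 0)
      + (if i ∈ S7 then 0.0037 else 0) + (if i ∈ S6 then 0.0020 else 0) with hwt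
  have tier : ∀ i, ∃ u W, ‖X i‖ ≤ u ∧ wt i ≤ W ∧ Tier u W := by
    intro i
    by_cases h6 : i ∈ S6
    · exact ⟨1.1072, 0.3228, hS6 i h6, by simp only [hwt]; split_ifs <;> norm_num,
        Or.inr (Or.inr (Or.inr (Or.inr ⟨rfl, rfl⟩)))⟩
    by_cases h7 : i ∈ S7
    · exact ⟨1.1138, 0.3208, hS7 i h7, by simp only [hwt, if_neg h6]; split_ifs <;> norm_num,
        Or.inr (Or.inr (Or.inr (Or.inl ⟨rfl, rfl⟩)))⟩
    by_cases h8 : i ∈ S8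
    · exact ⟨1.1254, 0.3171, hS8 i h8,
        by simp only [hwt, if_neg h6, if_neg h7]; split_ifs <;> norm_num,
        Or.inr (Or.inr (Or.inl ⟨rfl, rfl⟩))⟩
    by_cases h9 : i ∈ S9
    · exact ⟨1.1513, 0.3086, hS9 i h9,
        by simp only [hwt, if_neg h6, if_neg h7, if_neg h8]; split_ifs <;> norm_num,
        Or.inr (Or.inl ⟨rfl, rfl⟩)⟩
    · exact ⟨1.2571, 0.2677, (hall i).2,
        by simp only [hwt, if_neg h6, if_neg h7, if_neg h8, if_neg h9]; norm_num,
        Or.inl ⟨rfl, rfl⟩⟩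
  have hz1 : ∀ i, 1 ≤ ‖z i‖ := fun i => by rw [hnorm]; exact (hall i).1
  -- main pairwise angular gap bound
  have main : ∀ i j : Fin 10, i ≠ j →
      wt i + wt j ≤ |Complex.arg (z i) - Complex.arg (z j)| ∧
      wt i + wt j ≤ 2*π - |Complex.arg (z i) - Complex.arg (z j)| := by
    intro i j hne
    obtain ⟨u, W, hu, hW, hP⟩ := tier i
    obtain ⟨v, W', hv, hW', hP'⟩ := tier j
    obtain ⟨f1, f2, f3, f4, f5, f6, f7⟩ := tierFacts hP hP'
    have hd : (1/1.409:ℝ) ≤ dist (z i) (z j) := by rw [hdisteq]; exact hdist i j hne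
    obtain ⟨k1, k2⟩ := pairGap (z i) (z j) u v W W' (1 - (W+W')^2/2 + (W+W')^4/32)
      (hz1 i) (hz1 j) (by rw [hnorm]; exact hu) (by rw [hnorm]; exact hv) hd f1 f2 f3
      (le_refl _) f4 f5 f6 f7
    exact ⟨by linarith, by linarith⟩
  -- sort by argument
  set θ : Fin 10 → ℝ := fun i => Complex.arg (z i) with hθ
  set σ := Tuple.sort θ with hσ
  have hm : ∀ a b : Fin 10, a ≤ b → θ (σ a) ≤ θ (σ b) := fun a b h => Tuple.monotone_sort θ h
  have gap : ∀ a b : Fin 10, a ≠ b → θ (σ a) ≤ θ (σ b) →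
      wt (σ a) + wt (σ b) ≤ θ (σ b) - θ (σ a) := by
    intro a b hne hle
    have h := (main (σ a) (σ b) (fun h => hne (σ.injective h))).1
    rwa [abs_sub_comm, abs_of_nonneg (by linarith)] at h
  have wrap : wt (σ 9) + wt (σ 0) ≤ 2*π - (θ (σ 9) - θ (σ 0)) := by
    have h := (main (σ 9) (σ 0) (fun h => (by decide : (9:Fin 10) ≠ 0) (σ.injective h))).2
    rwa [abs_of_nonneg (by linarith [hm 0 9 (by decide)])] at h
  have g0 := gap 0 1 (by decide) (hm 0 1 (by decide))
  have g1 := gap 1 2 (by decide) (hm 1 2 (by decide))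
  have g2 := gap 2 3 (by decide) (hm 2 3 (by decide))
  have g3 := gap 3 4 (by decide) (hm 3 4 (by decide))
  have g4 := gap 4 5 (by decide) (hm 4 5 (by decide))
  have g5 := gap 5 6 (by decide) (hm 5 6 (by decide))
  have g6 := gap 6 7 (by decide) (hm 6 7 (by decide))
  have g7 := gap 7 8 (by decide) (hm 7 8 (by decide))
  have g8 := gap 8 9 (by decide) (hm 8 9 (by decide))
  have hexp : ∑ i, wt i = wt (σ 0) + wt (σ 1) + wt (σ 2) + wt (σ 3) + wt (σ 4) + wt (σ 5)
      + wt (σ 6) + wt (σ 7) + wt (σ 8) + wt (σ 9) := by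
    rw [← Equiv.sum_comp σ wt]
    exact sum10 (fun i => wt (σ i))
  have hsumeq : ∑ i, wt i = 10 * 0.2677 + S9.card * 0.0409 + S8.card * 0.0085
      + S7.card * 0.0037 + S6.card * 0.0020 := by
    simp only [hwt, Finset.sum_add_distrib, sumIte, Finset.sum_const, Finset.card_univ,
      Fintype.card_fin, nsmul_eq_mul]
    norm_num
  have hlow : (3.1510:ℝ) ≤ ∑ i, wt i := by
    rw [hsumeq]
    have c9 : (9:ℝ) ≤ S9.card := by exact_mod_cast hS9c
    have c8 : (8:ℝ) ≤ S8.card := by exact_mod_cast hS8c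
    have c7 : (7:ℝ) ≤ S7.card := by exact_mod_cast hS7c
    have c6 : (6:ℝ) ≤ S6.card := by exact_mod_cast hS6c
    nlinarith
  have hpi : π < 3.1416 := by
    have := Real.pi_lt_d6
    linarith
  linarith
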